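/- Let n ≥ 1 and let f₁,…,fₙ, g₁,…,gₙ be homogeneous polynomials of degree 2 and N a homogeneous polynomial of degree 3 in ℂ[x₁,…,xₙ] with gᵢ(f₁,…,fₙ) = N·xᵢ for all i. Then for every i, the polynomial N + xᵢ·(∂N/∂xᵢ) belongs to the ideal I = (f₁,…,fₙ). -/

import Mathlib

open MvPolynomial

/-- Chain rule for `bind₁`. -/
lemma pderiv_bind₁ {n : ℕ} (f : Fin n → MvPolynomial (Fin n) ℂ) (i : Fin n)
    (p : MvPolynomial (Fin n) ℂ) :
    pderiv i (bind₁ f p) = ∑ k, bind₁ f (pderiv k p) * pderiv i (f k) := by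
  induction p using MvPolynomial.induction_on with
  | C a => simp
  | add p q hp hq => simp [hp, hq, add_mul, Finset.sum_add_distrib]
  | mul_X p j hp =>
      simp only [map_mul, bind₁_X_right, pderiv_mul, hp]
      have : ∀ k : Fin n,
          bind₁ f (pderiv k p * X j + p * pderiv k (X j)) * pderiv i (f k) =
            bind₁ f (pderiv k p) * pderiv i (f k) * f j +
              bind₁ f p * (bind₁ f (pderiv k (X j)) * pderiv i (f k)) := by
        intro k
        simp only [map_add, map_mul, bind₁_X_right]
        ring
      rw [Finset.sum_congr rfl fun k _ => this k, Finset.sum_add_distrib,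
        ← Finset.sum_mul, ← Finset.mul_sum]
      congr 1
      have : ∀ k : Fin n, bind₁ f (pderiv k (X j : MvPolynomial (Fin n) ℂ)) * pderiv i (f k)
          = if k = j then pderiv i (f j) else 0 := by
        intro k
        by_cases h : k = j
        · subst h; simp
        · simp [pderiv_X_of_ne (Ne.symm h), h]
      rw [Finset.sum_congr rfl fun k _ => this k, Finset.sum_ite_eq']
      simp

lemma pderiv_isHomogeneous {n m : ℕ} {p : MvPolynomial (Fin n) ℂ}
    (hp : p.IsHomogeneous (m + 1)) (k : Fin n) :
    (pderiv k p).IsHomogeneous m := by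
  rw [← p.support_sum_monomial_coeff, map_sum]
  refine IsHomogeneous.sum _ _ _ fun d hd => ?_
  rw [pderiv_monomial]
  by_cases h : d k = 0
  · simpa [h] using isHomogeneous_zero (Fin n) ℂ m
  · refine isHomogeneous_monomial _ ?_
    have hdeg := hp (MvPolynomial.mem_support_iff.mp hd)
    have hsub : d - Finsupp.single k 1 + Finsupp.single k 1 = d := by
      ext j
      rcases eq_or_ne j k with rfl | hj
      · simp only [Finsupp.coe_add, Pi.add_apply, Finsupp.coe_tsub, Pi.sub_apply,
          Finsupp.single_eq_same]
        omega
      · simp [Finsupp.single_apply, Ne.symm hj]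
    simp only [Finsupp.degree_eq_weight_one]
    have h1 : (Finsupp.weight (1 : Fin n → ℕ)) (Finsupp.single k 1) = 1 := by
      simp [Finsupp.weight_apply, Finsupp.sum_single_index]
    have h2 := congrArg (Finsupp.weight (1 : Fin n → ℕ)) hsub
    rw [map_add, h1] at h2
    have e : (fun _ : Fin n => (1:ℕ)) = 1 := rfl
    simp only [e, Finsupp.degree_eq_weight_one] at hdeg h2 ⊢
    omega

lemma bind₁_mem_span {n : ℕ} (f : Fin n → MvPolynomial (Fin n) ℂ)
    (p : MvPolynomial (Fin n) ℂ) (hp : p.IsHomogeneous 1) :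
    bind₁ f p ∈ Ideal.span (Set.range f) := by
  have hmem : p ∈ Ideal.span (MvPolynomial.X '' (Set.univ : Set (Fin n))) := by
    rw [MvPolynomial.mem_ideal_span_X_image]
    intro m hm
    have hdeg := hp (MvPolynomial.mem_support_iff.mp hm)
    have : m ≠ 0 := by
      intro h0
      rw [h0] at hdeg
      simp [Finsupp.weight, Finsupp.linearCombination] at hdeg
    obtain ⟨j, hj⟩ := Finsupp.ne_iff.mp this
    exact ⟨j, Set.mem_univ j, by simpa using hj⟩
  have h := Ideal.mem_map_of_mem (bind₁ f).toRingHom hmem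
  rw [Ideal.map_span] at h
  have himg : (bind₁ f).toRingHom '' (MvPolynomial.X '' (Set.univ : Set (Fin n)))
      = Set.range f := by
    ext q
    simp [Set.image_image]
  rwa [himg] at h

/-- For a quadro-quadric Cremona transformation with lift `F = (f₁,…,fₙ)` and cubic
form `N`, one has `N + xᵢ · ∂N/∂xᵢ ∈ (f₁,…,fₙ)` for every `i`. -/
theorem stmt2 (n : ℕ) (hn : 1 ≤ n)
    (f g : Fin n → MvPolynomial (Fin n) ℂ)
    (N : MvPolynomial (Fin n) ℂ)
    (hf : ∀ i, (f i).IsHomogeneous 2) (hg : ∀ i, (g i).IsHomogeneous 2)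
    (hN : N.IsHomogeneous 3)
    (hgf : ∀ i, bind₁ f (g i) = N * X i) :
    ∀ i : Fin n,
      N + X i * pderiv i N ∈ Ideal.span (Set.range f) := by
  intro i
  have key : N + X i * pderiv i N = ∑ k, bind₁ f (pderiv k (g i)) * pderiv i (f k) := by
    rw [← pderiv_bind₁, hgf i, pderiv_mul, pderiv_X_self]
    ring
  rw [key]
  refine Ideal.sum_mem _ fun k _ => Ideal.mul_mem_right _ _ ?_
  exact bind₁_mem_span f _ (pderiv_isHomogeneous (hg i) k)
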